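/- Let q be a homogeneous polynomial of degree 2 in the variables x₁,…,x₅ whose polar form is nondegenerate, written as q = x₁·h₁ + q₁ with h₁ a linear form and q₁ a quadratic form in the variables x₂,…,x₅ only. Then h₁ ≠ 0 and the restriction of q₁ to the 3-dimensional hyperplane ker h₁ ⊆ ℂ⁴ is a nondegenerate quadratic form (i.e., q₁ restricted to ker h₁ has rank three). This is the computation showing that the Fano variety of a nodal cubic fourfold has transversal A₁-singularities along Σ. -/

import Mathlib

open MvPolynomial Finsupp

-- structure of degree-1 monomials
lemma aux_deg1 {σ : Type*} (m : σ →₀ ℕ) (h : Finsupp.degree m = 1) :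
    ∃ i, m = Finsupp.single i 1 := by
  classical
  have hne : m.support.Nonempty := by
    rw [Finset.nonempty_iff_ne_empty]
    intro he
    simp [Finsupp.degree_apply, he] at h
  obtain ⟨i, hi⟩ := hne
  refine ⟨i, ?_⟩
  have hmi : m i ≤ 1 := h ▸ Finsupp.le_degree i m
  have hmi1 : m i = 1 := le_antisymm hmi (Nat.one_le_iff_ne_zero.2 (Finsupp.mem_support_iff.1 hi))
  ext j
  rcases eq_or_ne j i with rfl | hj
  · simp [hmi1]
  · rw [Finsupp.single_apply, if_neg (fun e => hj e.symm)]
    by_contra hmj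
    have hjs : j ∈ m.support := Finsupp.mem_support_iff.2 hmj
    have : m i + m j ≤ Finsupp.degree m := by
      rw [Finsupp.degree_apply]
      rw [← Finset.add_sum_erase _ _ hi]
      have : m j ≤ ∑ k ∈ m.support.erase i, m k :=
        Finset.single_le_sum (fun k _ => Nat.zero_le _) (Finset.mem_erase.2 ⟨hj, hjs⟩)
      omega
    omega

lemma aux_degerase {σ : Type*} (m : σ →₀ ℕ) (i : σ) (hi : i ∈ m.support) :
    m i + Finsupp.degree (m.erase i) = Finsupp.degree m := by
  classical
  have h1 : Finsupp.degree (m.erase i) = ∑ k ∈ m.support.erase i, m k := by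
    rw [Finsupp.degree_apply, Finsupp.support_erase]
    exact Finset.sum_congr rfl fun k hk => Finsupp.erase_ne (Finset.mem_erase.1 hk).1
  rw [h1, Finsupp.degree_apply, Finset.add_sum_erase _ _ hi]

lemma aux_deg2 {σ : Type*} (m : σ →₀ ℕ) (h : Finsupp.degree m = 2) :
    ∃ i j, m = Finsupp.single i 1 + Finsupp.single j 1 := by
  classical
  have hne : m.support.Nonempty := by
    rw [Finset.nonempty_iff_ne_empty]
    intro he
    simp [Finsupp.degree_apply, he] at h
  obtain ⟨i, hi⟩ := hne
  have hd := aux_degerase m i hi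
  have hmi0 : m i ≠ 0 := Finsupp.mem_support_iff.1 hi
  have hmi2 : m i ≤ 2 := h ▸ Finsupp.le_degree i m
  have hcase : m i = 1 ∨ m i = 2 := by omega
  rcases hcase with hmi | hmi
  · -- m i = 1, erase has degree 1
    have : Finsupp.degree (m.erase i) = 1 := by rw [hmi] at hd; omega
    obtain ⟨j, hj⟩ := aux_deg1 _ this
    have hji : j ≠ i := by
      intro e
      have := congrArg (fun f => f i) hj
      simp [e, Finsupp.erase_same] at this
    refine ⟨i, j, ?_⟩
    ext k
    rcases eq_or_ne k i with rfl | hk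
    · simp [hmi, Finsupp.single_apply, if_neg (fun e : j = k => hji e)]
    · have := congrArg (fun f => f k) hj
      simp only [Finsupp.erase_ne hk] at this
      simp [this, Finsupp.single_apply, if_neg (fun e : i = k => hk e.symm)]
  · -- m i = 2, erase has degree 0
    have h0 : Finsupp.degree (m.erase i) = 0 := by rw [hmi] at hd; omega
    rw [Finsupp.degree_eq_zero_iff] at h0
    refine ⟨i, i, ?_⟩
    ext k
    rcases eq_or_ne k i with rfl | hk
    · simp [hmi]
    · have := congrArg (fun f => f k) h0
      simp only [Finsupp.erase_ne hk, Finsupp.coe_zero, Pi.zero_apply] at this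
      simp [this, Finsupp.single_apply, if_neg (fun e : i = k => hk e.symm)]

lemma aux_eval_mon1 (v : Fin 5 → ℂ) (i : Fin 5) (c : ℂ) :
    eval v (monomial (Finsupp.single i 1) c) = c * v i := by
  rw [eval_monomial, Finsupp.prod_single_index (by simp)]
  simp

lemma aux_eval_mon2 (v : Fin 5 → ℂ) (i j : Fin 5) (c : ℂ) :
    eval v (monomial (Finsupp.single i 1 + Finsupp.single j 1) c) = c * (v i * v j) := by
  rw [eval_monomial, Finsupp.prod_add_index' (fun a => pow_zero _) (fun a b₁ b₂ => pow_add _ _ _),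
    Finsupp.prod_single_index (by simp), Finsupp.prod_single_index (by simp)]
  simp

lemma aux_isHomog_degree {p : MvPolynomial (Fin 5) ℂ} {n : ℕ} (hp : p.IsHomogeneous n)
    {m : Fin 5 →₀ ℕ} (hm : m ∈ p.support) : Finsupp.degree m = n := by
  rw [Finsupp.degree_eq_weight_one]
  exact hp (MvPolynomial.mem_support_iff.1 hm)

-- linearity of evaluation of degree-1 homogeneous polynomials
lemma aux_lin {p : MvPolynomial (Fin 5) ℂ} (hp : p.IsHomogeneous 1) (v u : Fin 5 → ℂ) (a b : ℂ) :
    eval (a • v + b • u) p = a * eval v p + b * eval u p := by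
  conv_lhs => rw [p.as_sum]
  conv_rhs => rw [p.as_sum]
  simp only [map_sum, Finset.mul_sum, ← Finset.sum_add_distrib]
  refine Finset.sum_congr rfl fun m hm => ?_
  obtain ⟨i, rfl⟩ := aux_deg1 m (aux_isHomog_degree hp hm)
  simp only [aux_eval_mon1, Pi.add_apply, Pi.smul_apply, smul_eq_mul]
  ring

-- bilinearity of the polar form of degree-2 homogeneous polynomials
lemma aux_polar {p : MvPolynomial (Fin 5) ℂ} (hp : p.IsHomogeneous 2) (v u w : Fin 5 → ℂ) (a b : ℂ) :
    eval (v + (a • u + b • w)) p - eval v p - eval (a • u + b • w) p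
      = a * (eval (v + u) p - eval v p - eval u p)
        + b * (eval (v + w) p - eval v p - eval w p) := by
  have key : ∀ x : Fin 5 → ℂ, eval x p = ∑ m ∈ p.support, eval x (monomial m (coeff m p)) := by
    intro x
    conv_lhs => rw [p.as_sum]
    rw [map_sum]
  simp only [key, Finset.mul_sum, ← Finset.sum_sub_distrib, ← Finset.sum_add_distrib]
  refine Finset.sum_congr rfl fun m hm => ?_
  obtain ⟨i, j, rfl⟩ := aux_deg2 m (aux_isHomog_degree hp hm)
  simp only [aux_eval_mon2, Pi.add_apply, Pi.smul_apply, smul_eq_mul]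
  ring

-- evaluation only depends on coordinates appearing in the support constraint
lemma aux_indep {p : MvPolynomial (Fin 5) ℂ} (h0 : ∀ m ∈ p.support, m 0 = 0)
    (v w : Fin 5 → ℂ) (hvw : ∀ i, i ≠ 0 → v i = w i) : eval v p = eval w p := by
  conv_lhs => rw [p.as_sum]
  conv_rhs => rw [p.as_sum]
  simp only [map_sum, eval_monomial]
  refine Finset.sum_congr rfl fun m hm => ?_
  congr 1
  refine Finset.prod_congr rfl fun i hi => ?_
  have hi0 : i ≠ 0 := by
    intro e
    exact (Finsupp.mem_support_iff.1 hi) (e ▸ h0 m hm)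
  simp only []
  rw [hvw i hi0]

lemma aux_eval_zero {p : MvPolynomial (Fin 5) ℂ} {n : ℕ} (hp : p.IsHomogeneous n) (hn : n ≠ 0) :
    eval (0 : Fin 5 → ℂ) p = 0 := by
  conv_lhs => rw [p.as_sum]
  simp only [map_sum, eval_monomial]
  refine Finset.sum_eq_zero fun m hm => ?_
  have hd := aux_isHomog_degree hp hm
  have hne : m ≠ 0 := by
    intro e; rw [e, map_zero] at hd; exact hn hd.symm
  obtain ⟨i, hi⟩ := Finsupp.ne_iff.1 hne
  simp only [Finsupp.coe_zero, Pi.zero_apply] at hi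
  rw [Finsupp.prod]
  rw [Finset.prod_eq_zero (Finsupp.mem_support_iff.2 hi)]
  · simp
  · simp [zero_pow hi]

/-- for a nondegenerate quadratic form `q = x₁·h₁ + q₁` in `x₁, …, x₅`
(`h₁` linear and `q₁` quadratic in `x₂, …, x₅` only, the coordinates of `ℂ⁴` being
identified with the hyperplane `{x₁ = 0}` of `ℂ⁵`), one has `h₁ ≠ 0` and the
restriction of `q₁` to the hyperplane `ker h₁ ⊆ ℂ⁴` is a nondegenerate quadratic
form (rank three). -/
theorem stmt_6 (q h₁ q₁ : MvPolynomial (Fin 5) ℂ)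
    (hq : q.IsHomogeneous 2)
    (hqnd : ∀ v : Fin 5 → ℂ,
      (∀ u : Fin 5 → ℂ, (eval (v + u) q - eval v q - eval u q) / 2 = 0) → v = 0)
    (hh₁ : h₁.IsHomogeneous 1) (hq₁ : q₁.IsHomogeneous 2)
    (hh₁0 : ∀ m ∈ h₁.support, m 0 = 0) (hq₁0 : ∀ m ∈ q₁.support, m 0 = 0)
    (hdec : q = X 0 * h₁ + q₁) :
    h₁ ≠ 0 ∧
    ∀ v : Fin 5 → ℂ, v 0 = 0 → eval v h₁ = 0 →
      (∀ u : Fin 5 → ℂ, u 0 = 0 → eval u h₁ = 0 →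
        (eval (v + u) q₁ - eval v q₁ - eval u q₁) / 2 = 0) →
      v = 0 := by
  set e₀ : Fin 5 → ℂ := Pi.single 0 1 with he₀
  have he₀0 : e₀ 0 = 1 := Pi.single_eq_same 0 1
  have he₀i : ∀ i : Fin 5, i ≠ 0 → e₀ i = 0 := fun i hi => Pi.single_eq_of_ne hi 1
  -- q₁ does not depend on the 0-th coordinate
  have hq₁indep : ∀ y z : Fin 5 → ℂ, (∀ i, i ≠ 0 → y i = z i) → eval y q₁ = eval z q₁ :=
    fun y z h => aux_indep hq₁0 y z h
  have hh₁indep : ∀ y z : Fin 5 → ℂ, (∀ i, i ≠ 0 → y i = z i) → eval y h₁ = eval z h₁ :=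
    fun y z h => aux_indep hh₁0 y z h
  -- linearity helpers for h₁
  have hsmul : ∀ (c : ℂ) (x : Fin 5 → ℂ), eval (c • x) h₁ = c * eval x h₁ := by
    intro c x
    have := aux_lin hh₁ x x c 0
    simpa using this
  have hadd : ∀ x y : Fin 5 → ℂ, eval (x + y) h₁ = eval x h₁ + eval y h₁ := by
    intro x y
    have := aux_lin hh₁ x y 1 1
    simpa using this
  have he₀h : eval e₀ h₁ = 0 := by
    rw [hh₁indep e₀ 0 (fun i hi => he₀i i hi)]
    exact aux_eval_zero hh₁ one_ne_zero
  have hqsplit : ∀ y : Fin 5 → ℂ, eval y q = y 0 * eval y h₁ + eval y q₁ := by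
    intro y
    rw [hdec]
    simp
  -- first part: h₁ ≠ 0
  have hne : h₁ ≠ 0 := by
    intro h10
    rw [h10] at hqsplit
    simp only [map_zero, mul_zero, zero_add] at hqsplit
    have he := hqnd e₀ ?_
    · have := congrArg (fun f => f 0) he
      simp [he₀0] at this
    intro u
    rw [hqsplit, hqsplit, hqsplit,
      hq₁indep (e₀ + u) u (fun i hi => by simp [Pi.add_apply, he₀i i hi]),
      hq₁indep e₀ 0 (fun i hi => he₀i i hi), aux_eval_zero hq₁ two_ne_zero]
    ring
  refine ⟨hne, ?_⟩
  intro v hv0 hvh H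
  -- find a point where h₁ does not vanish
  have hex : ∃ x : Fin 5 → ℂ, eval x h₁ ≠ 0 := by
    by_contra hall
    push_neg at hall
    exact hne (MvPolynomial.funext fun x => by rw [hall x, map_zero])
  obtain ⟨w, hw⟩ := hex
  set w' : Fin 5 → ℂ := Function.update w 0 0 with hw'
  have hw'0 : w' 0 = 0 := Function.update_self 0 0 w
  have hw'h : eval w' h₁ = eval w h₁ :=
    hh₁indep w' w (fun i hi => Function.update_of_ne hi 0 w)
  set ustar : Fin 5 → ℂ := (eval w h₁)⁻¹ • w' with hustar
  have hustar0 : ustar 0 = 0 := by simp [hustar, hw'0]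
  have hustarh : eval ustar h₁ = 1 := by
    rw [hustar, hsmul, hw'h, inv_mul_cancel₀ hw]
  set c : ℂ := eval (v + ustar) q₁ - eval v q₁ - eval ustar q₁ with hc
  -- the key bilinearity claim
  have hkey : ∀ u : Fin 5 → ℂ,
      eval (v + u) q₁ - eval v q₁ - eval u q₁ = eval u h₁ * c := by
    intro u
    set u'' : Fin 5 → ℂ := Function.update u 0 0 with hu''
    have hu''i : ∀ i, i ≠ 0 → u'' i = u i := fun i hi => Function.update_of_ne hi 0 u
    have hred : eval (v + u) q₁ - eval v q₁ - eval u q₁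
        = eval (v + u'') q₁ - eval v q₁ - eval u'' q₁ := by
      rw [hq₁indep (v + u) (v + u'') (fun i hi => by simp [Pi.add_apply, hu''i i hi]),
        hq₁indep u u'' (fun i hi => (hu''i i hi).symm)]
    have hβ : eval u'' h₁ = eval u h₁ := hh₁indep u'' u (fun i hi => hu''i i hi)
    set β : ℂ := eval u h₁ with hβdef
    set w₀ : Fin 5 → ℂ := u'' - β • ustar with hw₀
    have hw₀0 : w₀ 0 = 0 := by simp [hw₀, hu'', hustar0]
    have hw₀h : eval w₀ h₁ = 0 := by
      have hrw : w₀ = (1 : ℂ) • u'' + (-β) • ustar := by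
        rw [hw₀]; module
      rw [hrw, aux_lin hh₁, hβ, hustarh]
      ring
    have hBw₀ : eval (v + w₀) q₁ - eval v q₁ - eval w₀ q₁ = 0 := by
      have := H w₀ hw₀0 hw₀h
      field_simp at this
      rw [mul_zero] at this
      exact this
    have hu''eq : (1 : ℂ) • w₀ + β • ustar = u'' := by
      rw [hw₀]; module
    have := aux_polar hq₁ v w₀ ustar 1 β
    rw [hu''eq] at this
    rw [hred, this, hBw₀]
    ring
  -- apply nondegeneracy of q to v - c • e₀
  have hz := hqnd (v - c • e₀) ?_
  · have h0 : v = c • e₀ := by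
      have := sub_eq_zero.1 hz
      exact this
    have hc0 : c = 0 := by
      have := congrArg (fun f => f 0) h0
      simpa [he₀0, hv0] using this.symm
    rw [h0, hc0, zero_smul]
  intro u
  have hz0 : (v - c • e₀) 0 = -c := by simp [hv0, he₀0]
  have hzi : ∀ i : Fin 5, i ≠ 0 → (v - c • e₀) i = v i := by
    intro i hi
    simp [he₀i i hi]
  have hzh : eval (v - c • e₀) h₁ = 0 := by
    have hrw : v - c • e₀ = (1 : ℂ) • v + (-c) • e₀ := by module
    rw [hrw, aux_lin hh₁, hvh, he₀h]
    ring
  have h1 : eval (v - c • e₀ + u) q = (u 0 - c) * eval u h₁ + eval (v + u) q₁ := by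
    rw [hqsplit]
    have e1 : (v - c • e₀ + u) 0 = u 0 - c := by simp [Pi.add_apply, hz0]; ring
    have e2 : eval (v - c • e₀ + u) h₁ = eval u h₁ := by
      rw [show v - c • e₀ + u = (v - c • e₀) + u from rfl, hadd, hzh, zero_add]
    have e3 : eval (v - c • e₀ + u) q₁ = eval (v + u) q₁ :=
      hq₁indep _ _ (fun i hi => by simp [Pi.add_apply, hzi i hi])
    rw [e1, e2, e3]
  have h2 : eval (v - c • e₀) q = eval v q₁ := by
    rw [hqsplit, hz0, hzh, mul_zero, zero_add]
    exact hq₁indep _ _ (fun i hi => hzi i hi)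
  have h3 : eval u q = u 0 * eval u h₁ + eval u q₁ := hqsplit u
  rw [h1, h2, h3]
  linear_combination (hkey u) / 2
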